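/- Let Φ be a totally ordered abelian group of finite rank h, with sequence of convex subgroups (0) = Ψ_h ⊂ Ψ_{h−1} ⊂ ⋯ ⊂ Ψ₁ ⊂ Ψ₀ = Φ. Then the divisible hull Φ ⊗_ℤ ℚ, with the induced ordering, is order-isomorphic to a lexicographic product Ξ₁ × ⋯ × Ξ_h of totally ordered divisible abelian groups of rank one, such that for each j the image of Ψⱼ ⊗_ℤ ℚ corresponds to {0} × ⋯ × {0} × Ξ_{j+1} × ⋯ × Ξ_h. -/

import Mathlib

namespace HahnAux

variable {G : Type*} [AddCommGroup G] [LinearOrder G] [IsOrderedAddMonoid G]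

/-- The set of rational approximations from below to `g / u`. -/
def cutS (u g : G) : Set ℝ :=
  {r : ℝ | ∃ m n : ℤ, 0 < n ∧ m • u ≤ n • g ∧ r = (m : ℝ) / (n : ℝ)}

lemma cutS_mem_iff {u g : G} (hu : 0 < u) {m n : ℤ} (hn : 0 < n) :
    ((m : ℝ) / (n : ℝ)) ∈ cutS u g ↔ m • u ≤ n • g := by
  constructor
  · rintro ⟨m', n', hn', hle, heq⟩
    have hnR : (n : ℝ) ≠ 0 := by positivity
    have hn'R : (n' : ℝ) ≠ 0 := by
      have : (0:ℝ) < (n' : ℝ) := by exact_mod_cast hn'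
      positivity
    rw [div_eq_div_iff (by positivity) (by positivity)] at heq
    have hcross : m * n' = m' * n := by exact_mod_cast heq
    have h1 : (n * m') • u ≤ (n * n') • g := by
      rw [mul_zsmul, mul_zsmul]
      exact zsmul_le_zsmul_right hn.le hle
    have h2 : (n' * m) • u ≤ (n' * n) • g := by
      have : n * m' = n' * m := by linarith [hcross]
      rw [← this, mul_comm n' n]; exact h1
    rw [mul_zsmul, mul_zsmul] at h2
    exact (zsmul_le_zsmul_iff_right hn').mp h2
  · intro hle
    exact ⟨m, n, hn, hle, rfl⟩

variable [Archimedean G]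

lemma cutS_nonempty {u g : G} (hu : 0 < u) : (cutS u g).Nonempty := by
  obtain ⟨k, hk⟩ := Archimedean.arch (-g) hu
  refine ⟨((-(k:ℤ) : ℤ) : ℝ) / ((1:ℤ) : ℝ), (cutS_mem_iff hu one_pos).mpr ?_⟩
  rw [one_zsmul, neg_zsmul, natCast_zsmul]
  exact neg_le.mp hk

lemma cutS_bddAbove {u g : G} (hu : 0 < u) : BddAbove (cutS u g) := by
  obtain ⟨K, hK⟩ := Archimedean.arch g hu
  refine ⟨(K : ℝ), ?_⟩
  rintro r ⟨m, n, hn, hle, rfl⟩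
  have h1 : m • u ≤ (n * (K : ℤ)) • u := by
    calc m • u ≤ n • g := hle
    _ ≤ n • ((K : ℤ) • u) := by
        refine zsmul_le_zsmul_right hn.le ?_
        rw [natCast_zsmul]; exact hK
    _ = (n * (K : ℤ)) • u := (mul_zsmul u n _).symm
  have hm : m ≤ n * K := (zsmul_le_zsmul_iff_left hu).mp h1
  have hnR : (0:ℝ) < (n : ℝ) := by exact_mod_cast hn
  rw [div_le_iff₀ hnR]
  calc ((m : ℤ) : ℝ) ≤ ((n * (K:ℤ) : ℤ) : ℝ) := by exact_mod_cast hm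
  _ = (K : ℝ) * (n : ℝ) := by push_cast; ring

/-- The Hölder map: `g ↦ sup { m/n : m • u ≤ n • g }`. -/
noncomputable def holderF (u g : G) : ℝ := sSup (cutS u g)

lemma le_holderF {u g : G} (hu : 0 < u) {r : ℝ} (hr : r ∈ cutS u g) : r ≤ holderF u g :=
  le_csSup (cutS_bddAbove hu) hr

lemma holderF_le {u g : G} (hu : 0 < u) {c : ℝ} (hc : ∀ r ∈ cutS u g, r ≤ c) :
    holderF u g ≤ c :=
  csSup_le (cutS_nonempty hu) hc

lemma exists_greatest (u g : G) (hu : 0 < u) {N : ℤ} (hN : 0 < N) :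
    ∃ m : ℤ, m • u ≤ N • g ∧ N • g < (m + 1) • u := by
  obtain ⟨K, hK⟩ := Archimedean.arch g hu
  obtain ⟨k, hk⟩ := Archimedean.arch (-g) hu
  have hbdd : ∃ b : ℤ, ∀ z ∈ {z : ℤ | z • u ≤ N • g}, z ≤ b := by
    refine ⟨N * K, fun z hz => ?_⟩
    have : z • u ≤ (N * (K:ℤ)) • u := by
      calc z • u ≤ N • g := hz
      _ ≤ N • ((K:ℤ) • u) := by
          refine zsmul_le_zsmul_right hN.le ?_; rw [natCast_zsmul]; exact hK
      _ = (N * (K:ℤ)) • u := (mul_zsmul u N _).symm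
    exact (zsmul_le_zsmul_iff_left hu).mp this
  have hinh : ∃ z : ℤ, z ∈ {z : ℤ | z • u ≤ N • g} := by
    refine ⟨N * (-(k:ℤ)), ?_⟩
    have h1 : (-(k:ℤ)) • u ≤ g := by
      rw [neg_zsmul, natCast_zsmul]; exact neg_le.mp hk
    calc (N * (-(k:ℤ))) • u = N • ((-(k:ℤ)) • u) := mul_zsmul u N _
    _ ≤ N • g := zsmul_le_zsmul_right hN.le h1
  obtain ⟨m, hm, hlub⟩ := Int.exists_greatest_of_bdd hbdd hinh
  refine ⟨m, hm, ?_⟩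
  by_contra hcon
  push_neg at hcon
  exact absurd (hlub (m+1) hcon) (by omega)

lemma holderF_add (u : G) (hu : 0 < u) (g g' : G) :
    holderF u (g + g') = holderF u g + holderF u g' := by
  apply le_antisymm
  · -- subadditive direction
    apply holderF_le hu
    rintro r ⟨p, q, hq, hle, rfl⟩
    refine le_of_forall_pos_le_add ?_
    intro ε hε
    obtain ⟨N, hN⟩ := exists_nat_gt (2 / ε)
    have hN0 : (0:ℝ) < (N:ℝ) := lt_trans (by positivity) hN
    have hNz : 0 < (N : ℤ) := by exact_mod_cast hN0
    obtain ⟨a, ha1, ha2⟩ := exists_greatest u g hu hNz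
    obtain ⟨b, hb1, hb2⟩ := exists_greatest u g' hu hNz
    have haf : ((a:ℝ))/(N:ℝ) ≤ holderF u g :=
      le_holderF hu ((cutS_mem_iff hu hNz).mpr ha1)
    have hbf : ((b:ℝ))/(N:ℝ) ≤ holderF u g' :=
      le_holderF hu ((cutS_mem_iff hu hNz).mpr hb1)
    have hM : (N:ℤ) • (g + g') < (a + b + 2) • u := by
      have := add_lt_add ha2 hb2
      rw [← zsmul_add] at this
      calc (N:ℤ) • (g + g') < (a+1) • u + (b+1) • u := this
      _ = (a + b + 2) • u := by rw [← add_zsmul]; ring_nf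
    -- p/q ≤ (a+b+2)/N
    have hkey : (p:ℝ)/(q:ℝ) ≤ ((a+b+2 : ℤ):ℝ)/(N:ℝ) := by
      rw [div_le_div_iff₀ (by exact_mod_cast hq) hN0]
      have hint : p * N ≤ (a+b+2) * q := by
        by_contra hcon
        push_neg at hcon
        have h1 : ((N:ℤ) * p) • u ≤ ((N:ℤ) * q) • (g + g') := by
          rw [mul_zsmul, mul_zsmul]
          exact zsmul_le_zsmul_right (by positivity) hle
        have h2 : (q * (a+b+2)) • u ≤ ((N:ℤ)*p) • u := by
          apply zsmul_le_zsmul_left hu.le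
          calc q * (a+b+2) = (a+b+2) * q := mul_comm _ _
          _ ≤ N * p := by rw [mul_comm (N:ℤ) p]; exact hcon.le
        have h3 : ((N:ℤ) * q) • (g+g') < (q * (a+b+2)) • u := by
          rw [mul_comm (N:ℤ) q, mul_zsmul, mul_zsmul]
          exact zsmul_lt_zsmul_right hq hM
        have := lt_of_le_of_lt (le_trans h2 h1) h3
        exact lt_irrefl _ this
      calc (p:ℝ) * (N:ℝ) = ((p * N : ℤ) : ℝ) := by push_cast; ring
      _ ≤ (((a+b+2) * q : ℤ) : ℝ) := by exact_mod_cast hint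
      _ = ((a+b+2 : ℤ):ℝ) * (q:ℝ) := by push_cast; ring
    have h2N : (2:ℝ)/(N:ℝ) ≤ ε := by
      rw [div_le_iff₀ hN0]
      rw [div_lt_iff₀ hε] at hN
      linarith
    calc (p:ℝ)/(q:ℝ) ≤ ((a+b+2 : ℤ):ℝ)/(N:ℝ) := hkey
    _ = (a:ℝ)/(N:ℝ) + (b:ℝ)/(N:ℝ) + 2/(N:ℝ) := by push_cast; ring
    _ ≤ holderF u g + holderF u g' + ε := by
        have := add_le_add (add_le_add haf hbf) h2N
        linarith
  · -- superadditive direction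
    have key : ∀ r ∈ cutS u g, ∀ r' ∈ cutS u g', r + r' ≤ holderF u (g + g') := by
      rintro r ⟨m, n, hn, hle, rfl⟩ r' ⟨m', n', hn', hle', rfl⟩
      apply le_holderF hu
      have heq : (m:ℝ)/(n:ℝ) + (m':ℝ)/(n':ℝ) = ((m * n' + m' * n : ℤ):ℝ)/((n * n' : ℤ):ℝ) := by
        have h1 : (n:ℝ) ≠ 0 := by positivity
        have h2 : (n':ℝ) ≠ 0 := by
          have : (0:ℝ) < (n':ℝ) := by exact_mod_cast hn'
          positivity
        field_simp
        try push_cast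
        try ring
      rw [heq]
      refine (cutS_mem_iff hu (by positivity)).mpr ?_
      rw [add_zsmul, zsmul_add]
      apply add_le_add
      · calc (m * n') • u = n' • (m • u) := by rw [mul_comm, mul_zsmul]
        _ ≤ n' • (n • g) := zsmul_le_zsmul_right hn'.le hle
        _ = (n * n') • g := by rw [mul_comm, mul_zsmul]
      · calc (m' * n) • u = n • (m' • u) := by rw [mul_comm, mul_zsmul]
        _ ≤ n • (n' • g') := zsmul_le_zsmul_right hn.le hle'
        _ = (n * n') • g' := by rw [mul_zsmul]
    -- conclude sup + sup ≤ sup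
    have h1 : ∀ r' ∈ cutS u g', holderF u g + r' ≤ holderF u (g + g') := by
      intro r' hr'
      have : ∀ r ∈ cutS u g, r ≤ holderF u (g + g') - r' := fun r hr => by
        linarith [key r hr r' hr']
      linarith [holderF_le hu this]
    have : ∀ r' ∈ cutS u g', r' ≤ holderF u (g + g') - holderF u g := fun r' hr' => by
      linarith [h1 r' hr']
    linarith [holderF_le hu this]

lemma holderF_pos (u : G) (hu : 0 < u) {g : G} (hg : 0 < g) : 0 < holderF u g := by
  obtain ⟨n, hn⟩ := Archimedean.arch u hg
  have hn0 : 0 < n := by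
    rcases Nat.eq_zero_or_pos n with h | h
    · subst h
      simp only [zero_smul] at hn
      exact absurd hn (not_le.mpr hu)
    · exact h
  have : ((1:ℤ):ℝ)/((n:ℤ):ℝ) ∈ cutS u g := by
    refine (cutS_mem_iff hu (by exact_mod_cast hn0)).mpr ?_
    rw [one_zsmul, natCast_zsmul]; exact hn
  have h2 := le_holderF hu this
  have : (0:ℝ) < ((1:ℤ):ℝ)/((n:ℤ):ℝ) := by
    have : (0:ℝ) < ((n:ℤ):ℝ) := by exact_mod_cast hn0
    positivity
  linarith

/-- Hölder's theorem, existence form. -/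
theorem holder_exists (G : Type*) [AddCommGroup G] [LinearOrder G] [IsOrderedAddMonoid G] [Archimedean G] :
    ∃ f : G →+ ℝ, ∀ g : G, 0 < g → 0 < f g := by
  by_cases hex : ∃ u : G, 0 < u
  · obtain ⟨u, hu⟩ := hex
    exact ⟨AddMonoidHom.mk' (holderF u) (holderF_add u hu), fun g hg => holderF_pos u hu hg⟩
  · exact ⟨0, fun g hg => absurd ⟨g, hg⟩ hex⟩


variable {G : Type*} [AddCommGroup G] [LinearOrder G] [IsOrderedAddMonoid G]

/-- There is an additive map to `ℝ` vanishing on a convex subgroup `N` and positive on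
positive elements outside `N`, provided the quotient is "archimedean over `N`". -/
theorem exists_good_hom (N : AddSubgroup G)
    (hN : ∀ x y : G, 0 ≤ x → x ≤ y → y ∈ N → x ∈ N)
    (harch : ∀ x y : G, 0 < y → y ∉ N → ∃ (n : ℕ) (ν : G), ν ∈ N ∧ x ≤ n • y + ν) :
    ∃ F : G →+ ℝ, (∀ x ∈ N, F x = 0) ∧ (∀ x : G, 0 < x → x ∉ N → 0 < F x) := by
  classical
  set Q := G ⧸ N with hQ
  let mk : G →+ Q := QuotientAddGroup.mk' N
  have mk_surj : Function.Surjective mk := QuotientAddGroup.mk'_surjective N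
  have mk_zero_iff : ∀ x : G, mk x = 0 ↔ x ∈ N := fun x => QuotientAddGroup.eq_zero_iff x
  -- nonnegativity predicate on the quotient
  let nonneg : Q → Prop := fun a => ∃ x : G, 0 ≤ x ∧ mk x = a
  have nonneg_zero : nonneg 0 := ⟨0, le_refl _, map_zero mk⟩
  have nonneg_add : ∀ a b, nonneg a → nonneg b → nonneg (a + b) := by
    rintro a b ⟨x, hx, rfl⟩ ⟨y, hy, rfl⟩
    exact ⟨x + y, add_nonneg hx hy, map_add mk x y⟩
  have nonneg_antisymm : ∀ a, nonneg a → nonneg (-a) → a = 0 := by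
    rintro a ⟨x, hx, rfl⟩ ⟨y, hy, hy2⟩
    have hxy : mk (x + y) = 0 := by rw [map_add, hy2]; abel
    have hxyN : x + y ∈ N := (mk_zero_iff _).mp hxy
    have hxN : x ∈ N := hN x (x + y) hx (le_add_of_nonneg_right hy) hxyN
    exact (mk_zero_iff _).mpr hxN
  letI linQ : LinearOrder Q :=
    { le := fun a b => nonneg (b - a)
      lt := fun a b => nonneg (b - a) ∧ ¬ nonneg (a - b)
      le_refl := fun a => by show nonneg _; rw [sub_self]; exact nonneg_zero
      le_trans := fun a b c h1 h2 => by
        show nonneg _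
        have := nonneg_add _ _ h2 h1
        rwa [sub_add_sub_cancel] at this
      le_antisymm := fun a b h1 h2 => by
        have := nonneg_antisymm _ h1 (by rwa [neg_sub])
        exact (sub_eq_zero.mp this).symm
      le_total := fun a b => by
        obtain ⟨x, rfl⟩ := mk_surj a
        obtain ⟨y, rfl⟩ := mk_surj b
        rcases le_total x y with h | h
        · exact Or.inl ⟨y - x, sub_nonneg.mpr h, map_sub mk y x⟩
        · exact Or.inr ⟨x - y, sub_nonneg.mpr h, map_sub mk x y⟩
      lt_iff_le_not_ge := fun a b => by
        constructor
        · rintro ⟨h1, h2⟩; exact ⟨h1, h2⟩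
        · rintro ⟨h1, h2⟩; exact ⟨h1, h2⟩
      toDecidableLE := fun a b => Classical.propDecidable _ }
  haveI loQ : IsOrderedAddMonoid Q :=
    { add_le_add_left := fun a b hab c => by
        show nonneg _
        rw [add_sub_add_right_eq_sub]
        exact hab }
  have mk_mono : ∀ x y : G, x ≤ y → mk x ≤ mk y := fun x y hxy =>
    ⟨y - x, sub_nonneg.mpr hxy, map_sub mk y x⟩
  have mk_pos : ∀ x : G, 0 < x → x ∉ N → 0 < mk x := by
    intro x hx hxN
    have h1 : (0 : Q) ≤ mk x := by
      have := mk_mono 0 x hx.le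
      rwa [map_zero] at this
    have h2 : mk x ≠ 0 := fun hc => hxN ((mk_zero_iff x).mp hc)
    exact lt_of_le_of_ne h1 (Ne.symm h2)
  haveI archQ : Archimedean Q := by
    constructor
    intro a b hb
    obtain ⟨x, rfl⟩ := mk_surj a
    have hb' : nonneg (b - 0) := hb.le
    rw [sub_zero] at hb'
    obtain ⟨y, hy, rfl⟩ := hb'
    have hyN : y ∉ N := by
      intro hc
      exact absurd ((mk_zero_iff y).mpr hc) (ne_of_gt hb)
    have hy0 : 0 < y := lt_of_le_of_ne hy (by rintro rfl; exact hyN N.zero_mem)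
    obtain ⟨n, ν, hν, hle⟩ := harch x y hy0 hyN
    refine ⟨n, ?_⟩
    have := mk_mono _ _ hle
    rwa [map_add, map_nsmul, (mk_zero_iff ν).mpr hν, add_zero] at this
  obtain ⟨f, hf⟩ := holder_exists Q
  refine ⟨f.comp mk, ?_, ?_⟩
  · intro x hx
    simp only [AddMonoidHom.comp_apply]
    rw [(mk_zero_iff x).mpr hx, map_zero]
  · intro x hx hxN
    exact hf _ (mk_pos x hx hxN)


open scoped TensorProduct

/-- Every element of `ℚ ⊗[ℤ] M` has a common denominator. -/
lemma exists_denominator {M : Type*} [AddCommGroup M] (v : ℚ ⊗[ℤ] M) :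
    ∃ (n : ℕ) (m : M), 0 < n ∧ (n : ℚ) • v = 1 ⊗ₜ[ℤ] m := by
  induction v using TensorProduct.induction_on with
  | zero => exact ⟨1, 0, one_pos, by simp⟩
  | tmul q x =>
      refine ⟨q.den, q.num • x, q.pos, ?_⟩
      have h1 : (q.den : ℚ) • (q ⊗ₜ[ℤ] x) = ((q.den : ℚ) * q) ⊗ₜ[ℤ] x := by
        rw [TensorProduct.smul_tmul', smul_eq_mul]
      rw [h1, mul_comm, Rat.mul_den_eq_num]
      have h2 : (q.num : ℚ) = q.num • (1 : ℚ) := by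
        rw [zsmul_eq_mul, mul_one]
      rw [h2, TensorProduct.smul_tmul]
  | add u w hu hw =>
      obtain ⟨n, m, hn, hnm⟩ := hu
      obtain ⟨n', m', hn', hnm'⟩ := hw
      refine ⟨n * n', (n' : ℤ) • m + (n : ℤ) • m', Nat.mul_pos hn hn', ?_⟩
      have : ((n * n' : ℕ) : ℚ) • (u + w)
          = (n' : ℚ) • ((n : ℚ) • u) + (n : ℚ) • ((n' : ℚ) • w) := by
        push_cast
        rw [smul_add, smul_smul, smul_smul, mul_comm (n':ℚ) (n:ℚ)]
      rw [this, hnm, hnm', TensorProduct.tmul_add]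
      congr 1
      · rw [show ((n' : ℕ) : ℚ) = (((n' : ℕ) : ℤ) : ℚ) from by norm_cast,
          Int.cast_smul_eq_zsmul, ← TensorProduct.tmul_smul]
      · rw [show ((n : ℕ) : ℚ) = (((n : ℕ) : ℤ) : ℚ) from by norm_cast,
          Int.cast_smul_eq_zsmul, ← TensorProduct.tmul_smul]

end HahnAux

open HahnAux


open scoped TensorProduct

/-- A convex subgroup of a totally ordered abelian group. -/
def IsConvexAddSubgroup {Φ : Type*} [AddCommGroup Φ] [LinearOrder Φ] [IsOrderedAddMonoid Φ]
    (Ψ : AddSubgroup Φ) : Prop :=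
  ∀ x y : Φ, 0 ≤ x → x ≤ y → y ∈ Ψ → x ∈ Ψ

/-- A totally ordered abelian group of finite rank `h`, with its maximal chain of
convex subgroups `(0) = Ψ_h ⊂ ⋯ ⊂ Ψ₀ = Φ`, has divisible hull order-isomorphic to a
lexicographic product of `h` rank-one totally ordered divisible groups (realized as
nontrivial `ℚ`-subspaces of `ℝ`), compatibly with the chain. -/
theorem divisible_hull_lex_product (Φ : Type*) [AddCommGroup Φ] [LinearOrder Φ] [IsOrderedAddMonoid Φ]
    (h : ℕ) (Ψ : Fin (h + 1) → AddSubgroup Φ)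
    (hconv : ∀ i, IsConvexAddSubgroup (Ψ i))
    (htop : Ψ 0 = ⊤) (hbot : Ψ (Fin.last h) = ⊥)
    (hanti : StrictAnti Ψ)
    (hmax : ∀ C : AddSubgroup Φ, IsConvexAddSubgroup C → ∃ i, C = Ψ i) :
    ∃ Ξ : Fin h → Submodule ℚ ℝ, (∀ j, Ξ j ≠ ⊥) ∧
      ∃ e : (ℚ ⊗[ℤ] Φ) ≃ₗ[ℚ] ↥(Submodule.pi Set.univ Ξ),
        (∀ x y : Φ, x ≤ y ↔
          toLex ((e (1 ⊗ₜ[ℤ] x) : Fin h → ℝ)) ≤ toLex ((e (1 ⊗ₜ[ℤ] y) : Fin h → ℝ))) ∧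
        (∀ j : Fin (h + 1), ∀ x : Φ, x ∈ Ψ j ↔
          ∀ i : Fin h, (i : ℕ) < (j : ℕ) → (e (1 ⊗ₜ[ℤ] x) : Fin h → ℝ) i = 0) := by
  classical
  have hΨle : ∀ {a b : Fin (h+1)}, a ≤ b → Ψ b ≤ Ψ a := fun hab => hanti.antitone hab
  have hΨrev : ∀ {a b : Fin (h+1)}, Ψ a < Ψ b → b < a := by
    intro a b hab
    by_contra hc
    push_neg at hc
    exact absurd (hΨle hc) hab.not_ge
  -- Step 1: the per-level homomorphisms `F j : Ψ (j.castSucc) →+ ℝ`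
  have key : ∀ j : Fin h, ∃ F : ↥(Ψ j.castSucc) →+ ℝ,
      (∀ x ∈ (Ψ j.succ).addSubgroupOf (Ψ j.castSucc), F x = 0) ∧
      (∀ x : ↥(Ψ j.castSucc), 0 < x → x ∉ (Ψ j.succ).addSubgroupOf (Ψ j.castSucc) → 0 < F x) := by
    intro j
    set G := ↥(Ψ j.castSucc)
    set N : AddSubgroup G := (Ψ j.succ).addSubgroupOf (Ψ j.castSucc) with hNdef
    have hNmem : ∀ x : G, x ∈ N ↔ (x : Φ) ∈ Ψ j.succ := fun x => AddSubgroup.mem_addSubgroupOf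
    have hNconv : ∀ x y : G, 0 ≤ x → x ≤ y → y ∈ N → x ∈ N := by
      intro x y hx hxy hyN
      rw [hNmem] at hyN ⊢
      exact hconv j.succ x y (by exact_mod_cast hx) (by exact_mod_cast hxy) hyN
    have harch : ∀ x y : G, 0 < y → y ∉ N → ∃ (n : ℕ) (ν : G), ν ∈ N ∧ x ≤ n • y + ν := by
      intro x y hy hyN
      by_contra hcon
      push_neg at hcon
      -- build an intermediate convex subgroup
      set C : AddSubgroup G :=
        { carrier := {g : G | ∃ (n : ℕ) (ν : G), ν ∈ N ∧ g ≤ n • y + ν ∧ -g ≤ n • y + ν}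
          zero_mem' := ⟨0, 0, N.zero_mem, by simp, by simp⟩
          add_mem' := by
            rintro a b ⟨n, ν, hν, ha1, ha2⟩ ⟨n', ν', hν', hb1, hb2⟩
            refine ⟨n + n', ν + ν', N.add_mem hν hν', ?_, ?_⟩
            · calc a + b ≤ (n • y + ν) + (n' • y + ν') := add_le_add ha1 hb1
              _ = (n + n') • y + (ν + ν') := by rw [add_nsmul]; abel
            · calc -(a + b) = -a + -b := by abel
              _ ≤ (n • y + ν) + (n' • y + ν') := add_le_add ha2 hb2
              _ = (n + n') • y + (ν + ν') := by rw [add_nsmul]; abel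
          neg_mem' := by
            rintro a ⟨n, ν, hν, ha1, ha2⟩
            exact ⟨n, ν, hν, ha2, by rwa [neg_neg]⟩ } with hCdef
      have hCconv : ∀ a b : G, 0 ≤ a → a ≤ b → b ∈ C → a ∈ C := by
        rintro a b ha hab ⟨n, ν, hν, hb1, hb2⟩
        refine ⟨n, ν, hν, le_trans hab hb1, ?_⟩
        calc -a ≤ 0 := neg_nonpos_of_nonneg ha
        _ ≤ a := ha
        _ ≤ b := hab
        _ ≤ n • y + ν := hb1
      have hyC : y ∈ C := by
        refine ⟨1, 0, N.zero_mem, ?_, ?_⟩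
        · rw [one_nsmul, add_zero]
        · rw [one_nsmul, add_zero]
          exact (neg_nonpos_of_nonneg hy.le).trans hy.le
      have hxC : x ∉ C := by
        rintro ⟨n, ν, hν, hx1, _⟩
        exact absurd hx1 (hcon n ν hν)
      set C' : AddSubgroup Φ := C.map (Ψ j.castSucc).subtype with hC'def
      have hmemC' : ∀ z : Φ, z ∈ C' ↔ ∃ g : G, g ∈ C ∧ (g : Φ) = z := by
        intro z
        rw [hC'def, AddSubgroup.mem_map]
        constructor
        · rintro ⟨g, hg, rfl⟩; exact ⟨g, hg, rfl⟩
        · rintro ⟨g, hg, rfl⟩; exact ⟨g, hg, rfl⟩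
      have hC'conv : IsConvexAddSubgroup C' := by
        intro a b ha hab hbC'
        obtain ⟨g, hgC, hgb⟩ := (hmemC' b).mp hbC'
        have haΨ : a ∈ Ψ j.castSucc := hconv j.castSucc a b ha hab (hgb ▸ g.2)
        have hb' : b ∈ Ψ j.castSucc := hgb ▸ g.2
        have hgeq : g = ⟨b, hb'⟩ := Subtype.ext hgb
        have : (⟨a, haΨ⟩ : G) ∈ C :=
          hCconv ⟨a, haΨ⟩ ⟨b, hb'⟩ (by exact_mod_cast ha) (by exact_mod_cast hab) (hgeq ▸ hgC)
        exact (hmemC' a).mpr ⟨⟨a, haΨ⟩, this, rfl⟩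
      obtain ⟨i, hi⟩ := hmax C' hC'conv
      -- Ψ j.succ < C'
      have h1 : Ψ j.succ < Ψ i := by
        rw [← hi]
        constructor
        · intro z hz
          have hzc : z ∈ Ψ j.castSucc := hΨle (Fin.castSucc_le_succ j) hz
          refine (hmemC' z).mpr ⟨⟨z, hzc⟩, ?_, rfl⟩
          rcases le_total 0 (⟨z, hzc⟩ : G) with hz0 | hz0
          · refine ⟨0, ⟨z, hzc⟩, (hNmem _).mpr hz, ?_, ?_⟩
            · rw [zero_nsmul, zero_add]
            · rw [zero_nsmul, zero_add]
              exact (neg_nonpos_of_nonneg hz0).trans hz0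
          · refine ⟨0, -⟨z, hzc⟩, N.neg_mem ((hNmem _).mpr hz), ?_, ?_⟩
            · rw [zero_nsmul, zero_add]
              exact hz0.trans (neg_nonneg.mpr hz0)
            · rw [zero_nsmul, zero_add]
        · intro hc
          have : (y : Φ) ∈ C' := (hmemC' y).mpr ⟨y, hyC, rfl⟩
          have := hc this
          exact hyN ((hNmem y).mpr this)
      have h2 : Ψ i < Ψ j.castSucc := by
        rw [← hi]
        constructor
        · rintro z hz
          obtain ⟨g, _, rfl⟩ := (hmemC' z).mp hz
          exact g.2
        · intro hc
          have : (x : Φ) ∈ C' := hc x.2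
          obtain ⟨g, hgC, hgx⟩ := (hmemC' x).mp this
          have : g = x := Subtype.ext hgx
          exact hxC (this ▸ hgC)
      have hlt1 := hΨrev h1
      have hlt2 := hΨrev h2
      have : (j.castSucc : ℕ) < i.1 := hlt2
      have : i.1 < (j.succ : ℕ) := hlt1
      simp [Fin.lt_def] at hlt1 hlt2
      omega
    exact exists_good_hom N hNconv harch
  choose F hF0 hFpos using key
  -- Step 2: extend to all of Φ, valued in the span of the range
  set D : Fin h → Submodule ℚ ℝ := fun j => Submodule.span ℚ (Set.range (F j)) with hDdef
  haveI hdiv : ∀ (W : Submodule ℚ ℝ), DivisibleBy ↥W ℤ := fun W => by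
    refine ⟨fun a n => ((n:ℚ)⁻¹) • a, fun a => by simp, fun {n} a hn => ?_⟩
    rw [← Int.cast_smul_eq_zsmul ℚ, smul_smul, mul_inv_cancel₀ (by exact_mod_cast hn), one_smul]
  have keyK : ∀ j : Fin h, ∃ K : Φ →+ ↥(D j),
      ∀ x : ↥(Ψ j.castSucc), (K x : ℝ) = F j x := by
    intro j
    set k : ↥(Ψ j.castSucc) →+ ↥(D j) :=
      { toFun := fun x => ⟨F j x, Submodule.subset_span (Set.mem_range_self x)⟩
        map_zero' := Subtype.ext (by simp)
        map_add' := fun a b => Subtype.ext (by simp) } with hkdef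
    obtain ⟨K, hK⟩ := (Module.Baer.of_divisible ↥(D j)).extension_property_addMonoidHom
      (Ψ j.castSucc).subtype (Ψ j.castSucc).subtype_injective k
    refine ⟨K, fun x => ?_⟩
    have := DFunLike.congr_fun hK x
    simp only [AddMonoidHom.comp_apply, AddSubgroup.coe_subtype] at this
    rw [this]
    rfl
  choose K hKagree using keyK
  set Kr : Fin h → (Φ →+ ℝ) := fun j =>
    ((D j).subtype.toAddMonoidHom).comp (K j) with hKrdef
  have hKr_mem : ∀ (j : Fin h) (x : Φ), Kr j x ∈ D j := fun j x => (K j x).2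
  have hKr_agree : ∀ (j : Fin h) (x : Φ) (hx : x ∈ Ψ j.castSucc),
      Kr j x = F j ⟨x, hx⟩ := by
    intro j x hx
    have := hKagree j ⟨x, hx⟩
    simpa [hKrdef] using this
  have hKr0 : ∀ (j : Fin h) (x : Φ), x ∈ Ψ j.succ → Kr j x = 0 := by
    intro j x hx
    have hxc : x ∈ Ψ j.castSucc := hΨle (Fin.castSucc_le_succ j) hx
    rw [hKr_agree j x hxc]
    exact hF0 j ⟨x, hxc⟩ (AddSubgroup.mem_addSubgroupOf.mpr hx)
  have hKrpos : ∀ (j : Fin h) (x : Φ) (hx : x ∈ Ψ j.castSucc),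
      0 < x → x ∉ Ψ j.succ → 0 < Kr j x := by
    intro j x hx h0 hns
    rw [hKr_agree j x hx]
    refine hFpos j ⟨x, hx⟩ (by exact_mod_cast h0) ?_
    rw [AddSubgroup.mem_addSubgroupOf]
    exact hns
  have hKrdet : ∀ (j : Fin h) (x : Φ), x ∈ Ψ j.castSucc → Kr j x = 0 → x ∈ Ψ j.succ := by
    intro j x hx hzero
    by_contra hns
    rcases lt_trichotomy x 0 with hlt | rfl | hgt
    · have hnx : -x ∉ Ψ j.succ := fun hc => hns (by simpa using (Ψ j.succ).neg_mem hc)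
      have := hKrpos j (-x) ((Ψ j.castSucc).neg_mem hx) (neg_pos.mpr hlt) hnx
      rw [map_neg, hzero] at this
      simp at this
    · exact hns (Ψ j.succ).zero_mem
    · have := hKrpos j x hx hgt hns
      rw [hzero] at this
      exact lt_irrefl _ this
  -- Step 3: the base-changed linear map
  set T : Φ →ₗ[ℤ] (Fin h → ℝ) := LinearMap.pi (fun i => (Kr i).toIntLinearMap) with hTdef
  have hTapp : ∀ (x : Φ) (i : Fin h), T x i = Kr i x := fun x i => rfl
  set E : (ℚ ⊗[ℤ] Φ) →ₗ[ℚ] (Fin h → ℝ) := LinearMap.liftBaseChange ℚ T with hEdef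
  have hE1 : ∀ x : Φ, E (1 ⊗ₜ[ℤ] x) = T x := by
    intro x
    rw [hEdef, LinearMap.liftBaseChange_tmul, one_smul]
  have hEmem : ∀ v, E v ∈ Submodule.pi Set.univ D := by
    intro v
    induction v using TensorProduct.induction_on with
    | zero => rw [map_zero]; exact Submodule.zero_mem _
    | tmul q x =>
        rw [Submodule.mem_pi]
        intro i _
        rw [hEdef, LinearMap.liftBaseChange_tmul]
        have : (q • T x) i = q • (Kr i x) := rfl
        rw [this]
        exact Submodule.smul_mem _ _ (hKr_mem i x)
    | add u w hu hw => rw [map_add]; exact Submodule.add_mem _ hu hw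
  -- injectivity
  have hEinj : Function.Injective E := by
    rw [injective_iff_map_eq_zero]
    intro v hv
    obtain ⟨n, m, hn, hnm⟩ := exists_denominator v
    have hTm : T m = 0 := by
      rw [← hE1, ← hnm, map_smul, hv, smul_zero]
    have hKrm : ∀ i : Fin h, Kr i m = 0 := by
      intro i
      have := congrFun hTm i
      rwa [hTapp] at this
    have hmem : ∀ p : ℕ, (hp : p ≤ h) → m ∈ Ψ ⟨p, by omega⟩ := by
      intro p
      induction p with
      | zero => intro _; have : (⟨0, by omega⟩ : Fin (h+1)) = 0 := rfl
                rw [this, htop]; trivial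
      | succ q ih =>
          intro hq
          have hqh : q < h := by omega
          have hqΨ := ih (by omega)
          have : m ∈ Ψ (Fin.succ ⟨q, hqh⟩) :=
            hKrdet ⟨q, hqh⟩ m (by convert hqΨ using 2; rfl) (hKrm ⟨q, hqh⟩)
          convert this using 2; rfl
    have : m ∈ Ψ (Fin.last h) := by
      have := hmem h (le_refl h)
      convert this using 2; rfl
    rw [hbot] at this
    simp only [AddSubgroup.mem_bot] at this
    subst this
    have : (n : ℚ) • v = 0 := by rw [hnm]; exact TensorProduct.tmul_zero _ _
    have hn0 : (n : ℚ) ≠ 0 := by exact_mod_cast hn.ne'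
    exact (smul_eq_zero.mp this).resolve_left hn0
  -- representation of elements of D j
  have hrep : ∀ (j : Fin h) (a : ℝ), a ∈ D j →
      ∃ (n : ℕ) (x : ↥(Ψ j.castSucc)), 0 < n ∧ (n : ℝ) * a = F j x := by
    intro j a ha
    induction ha using Submodule.span_induction with
    | mem a ha =>
        obtain ⟨x, rfl⟩ := ha
        exact ⟨1, x, one_pos, by norm_num⟩
    | zero => exact ⟨1, 0, one_pos, by simp⟩
    | add a b _ _ hpa hpb =>
        obtain ⟨n, x, hn, hx⟩ := hpa
        obtain ⟨n', x', hn', hx'⟩ := hpb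
        refine ⟨n * n', (n' : ℤ) • x + (n : ℤ) • x', Nat.mul_pos hn hn', ?_⟩
        rw [map_add, map_zsmul, map_zsmul, zsmul_eq_mul, zsmul_eq_mul]
        push_cast
        rw [← hx, ← hx']
        ring
    | smul q a _ hpa =>
        obtain ⟨n, x, hn, hx⟩ := hpa
        refine ⟨n * q.den, q.num • x, Nat.mul_pos hn q.pos, ?_⟩
        rw [map_zsmul, zsmul_eq_mul, ← hx]
        have hq : ((q.den : ℝ)) * (q : ℝ) = (q.num : ℝ) := by
          rw [mul_comm]
          exact_mod_cast congrArg (Rat.cast : ℚ → ℝ) (Rat.mul_den_eq_num q)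
        rw [Rat.smul_def, ← hq]
        push_cast
        ring
  -- surjectivity
  have hEsurj : ∀ a : Fin h → ℝ, (∀ i, a i ∈ D i) → ∃ v, E v = a := by
    have B : ∀ n : ℕ, n ≤ h → ∀ a : Fin h → ℝ, (∀ i, a i ∈ D i) →
        (∀ i : Fin h, (i : ℕ) < h - n → a i = 0) → ∃ v, E v = a := by
      intro n
      induction n with
      | zero =>
          intro _ a _ hz
          have : a = 0 := funext fun i => hz i (by omega)
          exact ⟨0, by rw [map_zero, this]⟩
      | succ q ih =>
          intro hq a ha hz
          set p := h - (q + 1) with hpdef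
          have hp : p < h := by omega
          set j : Fin h := ⟨p, hp⟩ with hjdef
          have hjval : (j : ℕ) = p := rfl
          obtain ⟨nn, x, hnn, hx⟩ := hrep j (a j) (ha j)
          set v₀ : ℚ ⊗[ℤ] Φ := ((nn : ℚ)⁻¹) • ((1:ℚ) ⊗ₜ[ℤ] (x : Φ)) with hv₀def
          have hEv₀ : ∀ i : Fin h, E v₀ i = (nn : ℝ)⁻¹ * Kr i (x : Φ) := by
            intro i
            rw [hv₀def, map_smul, hE1]
            have : ((nn:ℚ)⁻¹ • T (x:Φ)) i = (nn:ℚ)⁻¹ • (T (x:Φ) i) := rfl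
            rw [this, hTapp, Rat.smul_def]
            push_cast
            ring
          have hEv₀j : E v₀ j = a j := by
            rw [hEv₀ j]
            have hxx : Kr j (x : Φ) = F j x := by
              rw [hKr_agree j (x:Φ) x.2]
            rw [hxx, ← hx]
            have : (nn : ℝ) ≠ 0 := by exact_mod_cast hnn.ne'
            field_simp
          have hEv₀lt : ∀ i : Fin h, (i : ℕ) < p → E v₀ i = 0 := by
            intro i hi
            rw [hEv₀ i]
            have hxi : (x : Φ) ∈ Ψ i.succ := by
              refine hΨle ?_ x.2
              rw [Fin.le_def]
              simp only [Fin.val_succ, Fin.coe_castSucc]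
              exact Nat.succ_le_of_lt hi
            rw [hKr0 i (x:Φ) hxi, mul_zero]
          set a' : Fin h → ℝ := a - E v₀ with ha'def
          have ha' : ∀ i, a' i ∈ D i := by
            intro i
            refine Submodule.sub_mem _ (ha i) ?_
            have := hEmem v₀
            rw [Submodule.mem_pi] at this
            exact this i trivial
          have hz' : ∀ i : Fin h, (i : ℕ) < h - q → a' i = 0 := by
            intro i hi
            have hle : (i : ℕ) ≤ p := by omega
            rcases lt_or_eq_of_le hle with hlt | heq
            · have h1 : a i = 0 := hz i (by omega)
              have h2 : E v₀ i = 0 := hEv₀lt i hlt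
              simp [ha'def, h1, h2]
            · have : i = j := Fin.ext (by omega)
              subst this
              simp [ha'def, hEv₀j]
          obtain ⟨v', hv'⟩ := ih (by omega) a' ha' hz'
          refine ⟨v₀ + v', ?_⟩
          rw [map_add, hv']
          funext i
          simp [ha'def]
    intro a ha
    exact B h (le_refl h) a ha (fun i hi => by omega)
  -- assemble the equivalence
  set Ecod : (ℚ ⊗[ℤ] Φ) →ₗ[ℚ] ↥(Submodule.pi Set.univ D) :=
    E.codRestrict (Submodule.pi Set.univ D) hEmem with hEcoddef
  have hEcod_bij : Function.Bijective Ecod := by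
    constructor
    · intro u v huv
      apply hEinj
      have : (Ecod u : Fin h → ℝ) = (Ecod v : Fin h → ℝ) := by rw [huv]
      exact this
    · rintro ⟨a, ha⟩
      rw [Submodule.mem_pi] at ha
      obtain ⟨v, hv⟩ := hEsurj a (fun i => ha i trivial)
      exact ⟨v, Subtype.ext hv⟩
  set e : (ℚ ⊗[ℤ] Φ) ≃ₗ[ℚ] ↥(Submodule.pi Set.univ D) :=
    LinearEquiv.ofBijective Ecod hEcod_bij with hedef
  have hcoord : ∀ (x : Φ) (i : Fin h), (e (1 ⊗ₜ[ℤ] x) : Fin h → ℝ) i = Kr i x := by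
    intro x i
    have : (e (1 ⊗ₜ[ℤ] x) : Fin h → ℝ) = E (1 ⊗ₜ[ℤ] x) := rfl
    rw [this, hE1, hTapp]
  -- positivity: lexicographic leading coefficient
  have hposlex : ∀ z : Φ, 0 < z → ∃ j : Fin h,
      (∀ i : Fin h, i < j → Kr i z = 0) ∧ 0 < Kr j z := by
    intro z hz
    have hzne : z ≠ 0 := hz.ne'
    have hPex : ∃ n : ℕ, ∃ (hn : n < h + 1), z ∉ Ψ ⟨n, hn⟩ := by
      refine ⟨h, by omega, ?_⟩
      have : (⟨h, by omega⟩ : Fin (h+1)) = Fin.last h := rfl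
      rw [this, hbot]
      simpa using hzne
    set k := Nat.find hPex with hkdef
    obtain ⟨hk1, hk2⟩ := Nat.find_spec hPex
    have hk0 : k ≠ 0 := by
      intro hc
      apply hk2
      have : (⟨k, hk1⟩ : Fin (h+1)) = 0 := by
        apply Fin.ext; simp [hc]
      rw [this, htop]
      trivial
    have hkh : k ≤ h := by
      by_contra hc
      exact absurd hk1 (by omega)
    set j : Fin h := ⟨k - 1, by omega⟩ with hjdef
    have hjval : (j : ℕ) = k - 1 := rfl
    have hmemc : z ∈ Ψ j.castSucc := by
      have hmin := Nat.find_min hPex (m := k - 1) (by omega)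
      push_neg at hmin
      exact hmin (by omega)
    have hjsucc : j.succ = (⟨k, hk1⟩ : Fin (h+1)) := by
      apply Fin.ext
      show (k - 1) + 1 = k
      omega
    have hmems : z ∉ Ψ j.succ := by rw [hjsucc]; exact hk2
    refine ⟨j, ?_, hKrpos j z hmemc hz hmems⟩
    intro i hij
    apply hKr0
    refine hΨle ?_ hmemc
    rw [Fin.le_def]
    simp only [Fin.val_succ, Fin.coe_castSucc]
    exact Nat.succ_le_of_lt hij
  have hltlex : ∀ x y : Φ, x < y →
      toLex ((e (1 ⊗ₜ[ℤ] x) : Fin h → ℝ)) < toLex ((e (1 ⊗ₜ[ℤ] y) : Fin h → ℝ)) := by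
    intro x y hxy
    obtain ⟨j, hj0, hjpos⟩ := hposlex (y - x) (sub_pos.mpr hxy)
    refine ⟨j, fun k hk => ?_, ?_⟩
    · have h1 := hj0 k hk
      rw [map_sub] at h1
      have h2 := sub_eq_zero.mp h1
      show (e (1 ⊗ₜ[ℤ] x) : Fin h → ℝ) k = (e (1 ⊗ₜ[ℤ] y) : Fin h → ℝ) k
      rw [hcoord, hcoord]
      exact h2.symm
    · show (e (1 ⊗ₜ[ℤ] x) : Fin h → ℝ) j < (e (1 ⊗ₜ[ℤ] y) : Fin h → ℝ) j
      rw [map_sub] at hjpos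
      rw [hcoord, hcoord]
      linarith [hjpos]
  refine ⟨D, ?_, e, ?_, ?_⟩
  · -- nontriviality
    intro j
    have hlt : Ψ j.succ < Ψ j.castSucc := hanti (Fin.castSucc_lt_succ : j.castSucc < j.succ)
    obtain ⟨z, hz1, hz2⟩ := SetLike.exists_of_lt hlt
    have hKrz : Kr j z ≠ 0 := fun hc => hz2 (hKrdet j z hz1 hc)
    intro hc
    have : Kr j z ∈ D j := hKr_mem j z
    rw [hc] at this
    simp only [Submodule.mem_bot] at this
    exact hKrz this
  · -- order compatibility
    intro x y
    constructor
    · intro hxy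
      rcases eq_or_lt_of_le hxy with rfl | hlt
      · exact le_refl _
      · exact (hltlex x y hlt).le
    · intro hle
      by_contra hc
      push_neg at hc
      exact absurd (lt_of_le_of_lt hle (hltlex y x hc)) (lt_irrefl _)
  · -- chain compatibility
    intro j x
    constructor
    · intro hx i hij
      rw [hcoord]
      apply hKr0
      refine hΨle ?_ hx
      simp only [Fin.le_def, Fin.val_succ]
      omega
    · intro hcoords
      have hstep : ∀ p : ℕ, (hp : p ≤ (j : ℕ)) → x ∈ Ψ ⟨p, by omega⟩ := by
        intro p
        induction p with
        | zero =>
            intro _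
            have : (⟨0, by omega⟩ : Fin (h+1)) = 0 := rfl
            rw [this, htop]; trivial
        | succ q ih =>
            intro hq
            have hqh : q < h := by omega
            have hqΨ := ih (by omega)
            have hcast : x ∈ Ψ (Fin.castSucc ⟨q, hqh⟩) := hqΨ
            have hzero : Kr ⟨q, hqh⟩ x = 0 := by
              have := hcoords ⟨q, hqh⟩ (show q < (j : ℕ) by omega)
              rwa [hcoord] at this
            exact hKrdet ⟨q, hqh⟩ x hcast hzero
      exact hstep (j : ℕ) (le_refl _)
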